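/- Every prime ideal P of the semiring R̄[x] of univariate tropical polynomials that is also a tropical ideal and is neither {∞} nor the unit ideal is equal to J_a for some a ∈ ℝ ∪ {∞}, where J_a is the set of tropical polynomials f with a ∈ V(f). -/

import Mathlib

open Polynomial Tropical

/-- The tropical semiring `ℝ ∪ {∞}` with `⊕ = min` and `⊙ = +`. -/
abbrev TropR : Type := Tropical (WithTop ℝ)

/-- The value of the `i`-th term `bᵢ ⊙ aⁱ` of the tropical polynomial `f` at `a`. -/
noncomputable def trmVal (f : Polynomial TropR) (a : WithTop ℝ) (i : ℕ) : TropR :=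
  f.coeff i * Tropical.trop a ^ i

/-- The tropical variety `V(f) ⊆ ℝ ∪ {∞}` of a univariate tropical polynomial:
the points `a` with `f(a) = ∞` or where the minimum defining `f(a)` is attained by at
least two terms. -/
noncomputable def tropVa (f : Polynomial TropR) : Set (WithTop ℝ) :=
  {a | f.eval (Tropical.trop a) = 0 ∨
    ∃ i j : ℕ, i ≠ j ∧ trmVal f a i = f.eval (Tropical.trop a) ∧
      trmVal f a j = f.eval (Tropical.trop a)}

/-- `I` is a tropical ideal of `R̄[x]`: the polynomials of `I` supported on any finite
set of monomials form the vectors of a valuated matroid; equivalently `I` satisfies the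
vector (monomial) elimination axiom. -/
def IsTropicalIdealUV (I : Ideal (Polynomial TropR)) : Prop :=
  ∀ f ∈ I, ∀ g ∈ I, ∀ i : ℕ, f.coeff i = g.coeff i → f.coeff i ≠ 0 →
    ∃ h ∈ I, h.coeff i = 0 ∧
      (∀ j, f.coeff j + g.coeff j ≤ h.coeff j) ∧
      ∀ j, f.coeff j ≠ g.coeff j → h.coeff j = f.coeff j + g.coeff j


namespace TP


/-- trop of a real constant -/
noncomputable def tt (r : ℝ) : TropR := trop ((r : ℝ) : WithTop ℝ)

lemma untrop_tt (r : ℝ) : untrop (tt r) = (r : WithTop ℝ) := rfl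

lemma tt_ne_zero (r : ℝ) : tt r ≠ 0 := by
  intro h
  have : ((r : ℝ) : WithTop ℝ) = ⊤ := congrArg untrop h
  exact WithTop.coe_ne_top this

lemma eq_zero_of_zero_le {x : TropR} (h : (0:TropR) ≤ x) : x = 0 := by
  have h2 : (⊤ : WithTop ℝ) ≤ untrop x := untrop_le_iff.mpr h
  have : untrop x = ⊤ := top_le_iff.mp h2
  simpa [untrop_eq_iff_eq_trop] using this

lemma isUnit_of_ne_zero {c : TropR} (h : c ≠ 0) : IsUnit c := by
  refine isUnit_iff_exists_inv.mpr ?_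
  have h' : untrop c ≠ ⊤ := by simpa [untrop_eq_iff_eq_trop] using h
  obtain ⟨r, hr⟩ := WithTop.ne_top_iff_exists.mp h'
  refine ⟨tt (-r), ?_⟩
  have hc : c = tt r := by rw [tt, ← trop_untrop c, ← hr]
  rw [hc, tt, tt, ← trop_add]
  have : ((r:ℝ) + ((-r:ℝ)) : WithTop ℝ) = ((0:ℝ) : WithTop ℝ) := by
    rw [← WithTop.coe_add]; norm_num
  rw [this]; rfl

variable {P : Ideal (Polynomial TropR)}

lemma top_of_unit_mem (hTop : P ≠ ⊤) {c : TropR} (hc : c ≠ 0) (h : C c ∈ P) : False :=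
  hTop (P.eq_top_of_isUnit_mem h ((isUnit_C).mpr (isUnit_of_ne_zero hc)))

/-- The fundamental "erase one coefficient" consequence of the elimination axiom. -/
lemma erase_mem (hTrop : IsTropicalIdealUV P) {f g : Polynomial TropR}
    (hf : f ∈ P) (hg : g ∈ P) (i : ℕ)
    (hfg : f.coeff i = g.coeff i) (hne : f.coeff i ≠ 0)
    (hside : ∀ l, l ≠ i → g.coeff l = 0 ∨ f.coeff l ≠ g.coeff l) :
    ∃ h ∈ P, h.coeff i = 0 ∧ ∀ l, l ≠ i → h.coeff l = f.coeff l + g.coeff l := by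
  obtain ⟨h, hhP, hhi, hle, hdiff⟩ := hTrop f hf g hg i hfg hne
  refine ⟨h, hhP, hhi, fun l hl => ?_⟩
  rcases eq_or_ne (f.coeff l) (g.coeff l) with he | hne'
  · rcases hside l hl with h0 | hne'
    · have hf0 : f.coeff l = 0 := he.trans h0
      rw [hf0, h0, add_zero]
      exact eq_zero_of_zero_le (by simpa [hf0, h0] using hle l)
    · exact absurd he hne'
  · exact hdiff l hne'

/-- the linear polynomial `x ⊕ r`. -/
noncomputable def lin (r : ℝ) : Polynomial TropR := X + C (tt r)

/-- the binomial `c x^q ⊕ c r^(q-p) x^p`. -/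
noncomputable def bin (r : ℝ) (p q : ℕ) (c : TropR) : Polynomial TropR :=
  C (c * (tt r)^(q-p)) * X^p + C c * X^q

lemma coeff_bin (r : ℝ) {p q : ℕ} (hpq : p < q) (c : TropR) (l : ℕ) :
    (bin r p q c).coeff l = if l = p then c * (tt r)^(q-p) else if l = q then c else 0 := by
  simp only [bin, coeff_add, coeff_C_mul, coeff_X_pow, mul_ite, mul_one, mul_zero]
  by_cases h1 : l = p
  · subst h1
    rw [if_pos rfl, if_neg (by omega : l ≠ q), add_zero, if_pos rfl]
  · rw [if_neg h1, zero_add, if_neg h1]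

lemma bin_mem (hTrop : IsTropicalIdealUV P) {r : ℝ} (hlin : lin r ∈ P) :
    ∀ m p (c : TropR), c ≠ 0 → m ≠ 0 → bin r p (p + m) c ∈ P := by
  intro m
  induction m with
  | zero => intro p c hc h0; exact absurd rfl h0
  | succ m ih =>
    intro p c hc _
    rcases Nat.eq_zero_or_pos m with hm | hm
    · subst hm
      have : bin r p (p+1) c = (C c * X^p) * lin r := by
        simp only [bin, lin, Nat.add_sub_cancel_left, pow_one, C_mul]
        ring
      rw [this]
      exact P.mul_mem_left _ hlin
    · have hf : bin r p (p+m) (c * tt r) ∈ P :=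
        ih p _ (mul_ne_zero hc (tt_ne_zero r)) hm.ne'
      have hgP : bin r (p+m) (p+m+1) c ∈ P := by
        have : bin r (p+m) (p+m+1) c = (C c * X^(p+m)) * lin r := by
          simp only [bin, lin, Nat.add_sub_cancel_left, pow_one, C_mul,
            (by omega : p+m+1-(p+m) = 1)]
          ring
        rw [this]; exact P.mul_mem_left _ hlin
      have hplt : p < p + m := by omega
      have hplt2 : p + m < p + m + 1 := by omega
      have hcoef : (bin r p (p+m) (c * tt r)).coeff (p+m) = (bin r (p+m) (p+m+1) c).coeff (p+m) := by
        rw [coeff_bin r hplt, coeff_bin r hplt2, (by omega : p+m+1-(p+m) = 1), pow_one,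
          if_neg (show ¬ p+m = p by omega), if_pos rfl, if_pos rfl]
      have hcne : (bin r p (p+m) (c * tt r)).coeff (p+m) ≠ 0 := by
        rw [coeff_bin r hplt, if_neg (show ¬ p+m = p by omega), if_pos rfl]
        exact mul_ne_zero hc (tt_ne_zero r)
      obtain ⟨h, hhP, hhi, hco⟩ := erase_mem hTrop hf hgP (p+m) hcoef hcne
        (by intro l hl
            rw [coeff_bin r hplt, coeff_bin r hplt2]
            by_cases h1 : l = p + m + 1
            · right
              rw [if_neg (show ¬ l = p by omega), if_neg hl, if_neg hl, if_pos h1]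
              exact fun hcon => hc hcon.symm
            · left
              rw [if_neg hl, if_neg h1])
      have heq : h = bin r p (p + (m+1)) c := by
        ext l
        rw [coeff_bin r (by omega : p < p + (m+1)) c l]
        by_cases h1 : l = p + m
        · rw [h1, hhi, if_neg (show ¬ p+m = p by omega), if_neg (show ¬ p+m = p+(m+1) by omega)]
        · rw [hco l h1, coeff_bin r hplt, coeff_bin r hplt2,
            (by omega : p+m-p = m), (by omega : p+m+1-(p+m) = 1), (by omega : p+(m+1)-p = m+1),
            pow_one]
          split_ifs <;> first
            | omega
            | simp [pow_succ, mul_assoc, mul_comm, mul_left_comm]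
      rw [heq] at hhP
      exact (show p + (m+1) = p + m + 1 by omega) ▸ hhP


lemma untrop_eval (f : Polynomial TropR) (a : WithTop ℝ) :
    untrop (f.eval (trop a)) =
      (Finset.range (f.natDegree+1)).inf (fun i => untrop (trmVal f a i)) := by
  rw [eval_eq_sum_range, Finset.untrop_sum']
  rfl

lemma eval_le_trmVal (f : Polynomial TropR) (a : WithTop ℝ) (i : ℕ) :
    f.eval (trop a) ≤ trmVal f a i := by
  by_cases hi : i < f.natDegree + 1
  · exact untrop_le_iff.mp (by rw [untrop_eval]; exact Finset.inf_le (Finset.mem_range.mpr hi))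
  · have : f.coeff i = 0 := coeff_eq_zero_of_natDegree_lt (by omega)
    have h0 : trmVal f a i = 0 := by rw [trmVal, this, zero_mul]
    rw [h0]
    exact untrop_le_iff.mp le_top

lemma exists_attain (f : Polynomial TropR) (a : WithTop ℝ) :
    ∃ i, i ≤ f.natDegree ∧ trmVal f a i = f.eval (trop a) := by
  obtain ⟨i, hmem, hi⟩ := Finset.exists_mem_eq_inf (Finset.range (f.natDegree+1))
    (by simp) (fun i => untrop (trmVal f a i))
  refine ⟨i, Nat.lt_succ_iff.mp (Finset.mem_range.mp hmem), untrop_injective ?_⟩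
  rw [untrop_eval, hi]

lemma eq_zero_of_eval_eq_zero {f : Polynomial TropR} {r : ℝ}
    (h : f.eval (trop ↑r) = 0) : f = 0 := by
  ext i
  have hle := eval_le_trmVal f ↑r i
  rw [h] at hle
  have h0 : trmVal f ↑r i = 0 := eq_zero_of_zero_le hle
  rcases mul_eq_zero.mp h0 with hc | hp
  · simpa using hc
  · exact absurd hp (pow_ne_zero _ (tt_ne_zero r))

lemma top_mem_tropVa_iff (f : Polynomial TropR) :
    (⊤:WithTop ℝ) ∈ tropVa f ↔ f.coeff 0 = 0 := by
  have htrop : trop (⊤:WithTop ℝ) = (0:TropR) := rfl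
  have heval : f.eval (trop (⊤:WithTop ℝ)) = f.coeff 0 := by
    rw [htrop, ← coeff_zero_eq_eval_zero]
  have hval : ∀ i, trmVal f ⊤ i = if i = 0 then f.coeff 0 else 0 := by
    intro i
    rcases Nat.eq_zero_or_pos i with h | h
    · subst h; simp [trmVal, htrop]
    · rw [trmVal, htrop, zero_pow h.ne', mul_zero, if_neg h.ne']
  constructor
  · rintro (h | ⟨i, j, hij, hi, hj⟩)
    · rwa [heval] at h
    · by_contra hne
      rw [hval, heval] at hi hj
      have hi0 : i = 0 := by
        by_contra hi0
        rw [if_neg hi0] at hi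
        exact hne hi.symm
      have hj0 : j = 0 := by
        by_contra hj0
        rw [if_neg hj0] at hj
        exact hne hj.symm
      exact hij (hi0.trans hj0.symm)
  · intro h
    left
    rw [heval, h]

lemma untrop_coeff_mul (p q : Polynomial TropR) (k : ℕ) :
    untrop ((p*q).coeff k) = (Finset.HasAntidiagonal.antidiagonal k).inf
      (fun ij => untrop (p.coeff ij.1) + untrop (q.coeff ij.2)) := by
  rw [coeff_mul, Finset.untrop_sum']
  rfl

lemma inf_add_coe (s : Finset ℕ) (g : ℕ → WithTop ℝ) (c : ℝ) :
    s.inf g + (c : WithTop ℝ) = s.inf (fun j => g j + (c : WithTop ℝ)) := by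
  induction s using Finset.cons_induction with
  | empty => simp
  | cons a s ha ih =>
    rw [Finset.inf_cons, Finset.inf_cons, ← ih]
    exact (min_add_add_right (g a) (s.inf g) (c : WithTop ℝ)).symm

lemma coe_add_wt (x : WithTop ℝ) (c₁ c₂ : ℝ) :
    (x + ↑c₁) + (↑c₂:WithTop ℝ) = x + ↑(c₁+c₂) := by
  rw [add_assoc, ← WithTop.coe_add]

/-- tropical mul by a real constant, untrop form -/
lemma untrop_tt_mul (r : ℝ) (x : TropR) : untrop (tt r * x) = ↑r + untrop x :=
  untrop_mul _ _

lemma trop_coe_congr {x y : ℝ} (h : x = y) : trop ((x:ℝ):WithTop ℝ) = trop ((y:ℝ):WithTop ℝ) := by rw [h]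

lemma coeff_lin_pow (a : ℝ) : ∀ (n k : ℕ),
    ((lin a)^n).coeff k = if k ≤ n then trop ↑(((n:ℝ) - k) * a) else 0 := by
  intro n
  induction n with
  | zero =>
    intro k
    rcases Nat.eq_zero_or_pos k with h | h
    · subst h
      rw [pow_zero, coeff_one, if_pos rfl, if_pos le_rfl]
      have : (((0:ℕ):ℝ) - ((0:ℕ):ℝ)) * a = 0 := by norm_num
      rw [this]
      rfl
    · rw [pow_zero, coeff_one, if_neg h.ne', if_neg (by omega)]
  | succ n ih =>
    intro k
    have hexp : (lin a)^(n+1) = (lin a)^n * X + C (tt a) * (lin a)^n := by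
      rw [pow_succ, lin]; ring
    rw [hexp, coeff_add, coeff_C_mul, ih k]
    rcases Nat.eq_zero_or_pos k with h | h
    · subst h
      rw [coeff_mul_X_zero ((lin a)^n), zero_add, if_pos (by omega), if_pos (by omega),
        tt, ← trop_add, ← WithTop.coe_add]
      exact trop_coe_congr (by push_cast; ring)
    · obtain ⟨k', rfl⟩ := Nat.exists_eq_add_of_lt h
      rw [zero_add, coeff_mul_X, ih k']
      by_cases h1 : k' + 1 ≤ n
      · rw [if_pos (by omega : k' ≤ n), if_pos h1, if_pos (by omega), tt, ← trop_add,
          ← WithTop.coe_add]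
        rw [trop_coe_congr (show a + ((n:ℝ) - (↑(k'+1))) * a = ((n:ℝ) - ↑k') * a by push_cast; ring),
          trop_coe_congr (show ((↑(n+1):ℝ) - ↑(k'+1)) * a = ((n:ℝ) - ↑k') * a by push_cast; ring)]
        exact Tropical.add_self _
      · by_cases h2 : k' ≤ n
        · rw [if_pos h2, if_neg h1, mul_zero, add_zero, if_pos (by omega)]
          exact trop_coe_congr (by push_cast; ring)
        · rw [if_neg h1, if_neg h2, if_neg (by omega), mul_zero, add_zero]

lemma coe_untop'_of_ne {x : WithTop ℝ} (h : x ≠ ⊤) : ((WithTop.untopD 0 x : ℝ) : WithTop ℝ) = x := by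
  cases x with
  | top => exact absurd rfl h
  | coe y => rfl

lemma conv_coeff (a : ℝ) (d : ℕ) (h : Polynomial TropR) (k : ℕ) :
    untrop (((lin a)^d * h).coeff k) =
      (Finset.Icc (k-d) k).inf (fun j => untrop (h.coeff j) + ↑((j:ℝ) * a)) + ↑(((d:ℝ) - k) * a) := by
  rw [untrop_coeff_mul, inf_add_coe]
  apply le_antisymm
  · apply Finset.le_inf
    intro j hj
    obtain ⟨hj1, hj2⟩ := Finset.mem_Icc.mp hj
    have hmem : (k - j, j) ∈ Finset.HasAntidiagonal.antidiagonal k := by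
      rw [Finset.HasAntidiagonal.mem_antidiagonal]; omega
    refine le_trans (Finset.inf_le hmem) ?_
    simp only
    rw [coeff_lin_pow, if_pos (by omega : k - j ≤ d), untrop_trop, coe_add_wt, add_comm]
    apply le_of_eq
    congr 1
    rw [WithTop.coe_eq_coe]
    have hc : (((k - j : ℕ)) : ℝ) = (k:ℝ) - (j:ℝ) := by
      rw [Nat.cast_sub hj2]
    rw [hc]; ring
  · apply Finset.le_inf
    rintro ⟨i, j⟩ hij
    have hsum : i + j = k := Finset.HasAntidiagonal.mem_antidiagonal.mp hij
    simp only
    by_cases hi : i ≤ d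
    · have hjmem : j ∈ Finset.Icc (k-d) k := Finset.mem_Icc.mpr (by omega)
      refine le_trans (Finset.inf_le hjmem) ?_
      rw [coeff_lin_pow, if_pos hi, untrop_trop, coe_add_wt, add_comm]
      apply le_of_eq
      congr 1
      rw [WithTop.coe_eq_coe]
      have hc : (i:ℝ) = (k:ℝ) - (j:ℝ) := by
        have : ((i + j : ℕ):ℝ) = (k:ℝ) := by rw [hsum]
        push_cast at this; linarith
      rw [hc]; ring
    · rw [coeff_lin_pow, if_neg hi, untrop_zero, top_add]
      exact le_top

lemma coeff_rangeSum (n : ℕ) (c : ℕ → TropR) (l : ℕ) :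
    (∑ j ∈ Finset.range n, C (c j) * X^j).coeff l = if l < n then c l else 0 := by
  rw [finset_sum_coeff]
  simp only [coeff_C_mul, coeff_X_pow, mul_ite, mul_one, mul_zero]
  rw [Finset.sum_ite_eq (Finset.range n) l c]
  simp [Finset.mem_range]

noncomputable def wfun (f : Polynomial TropR) (a : ℝ) : ℕ → WithTop ℝ :=
  fun j => untrop (f.coeff j) + ↑((j:ℝ)*a)

noncomputable def Rfun (f : Polynomial TropR) (a : ℝ) (d : ℕ) : ℕ → WithTop ℝ :=
  fun i => (Finset.Icc i d).inf (wfun f a)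

noncomputable def gpoly (f : Polynomial TropR) (a : ℝ) (d : ℕ) : Polynomial TropR :=
  ∑ j ∈ Finset.range (d+1), C (trop (Rfun f a d j + ↑(-(j:ℝ)*a))) * X^j

noncomputable def qpoly (f : Polynomial TropR) (a : ℝ) (d : ℕ) : Polynomial TropR :=
  ∑ j ∈ Finset.range d, C (trop (Rfun f a d (j+1) + ↑(-((j:ℝ)+1)*a))) * X^j

lemma wt_shuffle1 (x : WithTop ℝ) (c : ℝ) : (x + ↑(-c)) + (↑c : WithTop ℝ) = x := by
  rw [coe_add_wt, neg_add_cancel, WithTop.coe_zero, add_zero]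

lemma wt_shuffle2 (x : WithTop ℝ) (c c' : ℝ) :
    (↑c' : WithTop ℝ) + (x + ↑c) = x + ↑(c+c') := by
  rw [add_comm ((↑c' : WithTop ℝ)) _, coe_add_wt]

lemma Rfun_mono (f : Polynomial TropR) (a : ℝ) (d : ℕ) {i j : ℕ} (hij : i ≤ j) :
    Rfun f a d i ≤ Rfun f a d j :=
  Finset.inf_mono (Finset.Icc_subset_Icc hij le_rfl)

lemma Rfun_top (f : Polynomial TropR) (a : ℝ) (d : ℕ) {i : ℕ} (hi : d < i) :
    Rfun f a d i = ⊤ := by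
  rw [Rfun, Finset.Icc_eq_empty (by omega), Finset.inf_empty]

lemma coeff_gpoly (f : Polynomial TropR) (a : ℝ) (d : ℕ) (l : ℕ) :
    (gpoly f a d).coeff l = if l < d+1 then trop (Rfun f a d l + ↑(-(l:ℝ)*a)) else 0 :=
  coeff_rangeSum _ _ l

lemma coeff_qpoly (f : Polynomial TropR) (a : ℝ) (d : ℕ) (l : ℕ) :
    (qpoly f a d).coeff l = if l < d then trop (Rfun f a d (l+1) + ↑(-((l:ℝ)+1)*a)) else 0 :=
  coeff_rangeSum _ _ l

lemma wfun_gpoly (f : Polynomial TropR) (a : ℝ) (d : ℕ) (j : ℕ) :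
    wfun (gpoly f a d) a j = if j ≤ d then Rfun f a d j else ⊤ := by
  rw [wfun, coeff_gpoly]
  by_cases h : j < d + 1
  · rw [if_pos h, if_pos (by omega), untrop_trop]
    have : (-(j:ℝ)*a) = -((j:ℝ)*a) := by ring
    rw [this, wt_shuffle1]
  · rw [if_neg h, if_neg (by omega), untrop_zero, top_add]

lemma lemA (f : Polynomial TropR) (a : ℝ)
    (hmin : ∀ j, wfun f a 0 ≤ wfun f a j) :
    (lin a)^(f.natDegree) * f = (lin a)^(f.natDegree) * gpoly f a f.natDegree := by
  set d := f.natDegree with hd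
  have hwtop : ∀ j, d < j → wfun f a j = ⊤ := by
    intro j hj
    rw [wfun, coeff_eq_zero_of_natDegree_lt hj, untrop_zero, top_add]
  have A1 : ∀ k, (Finset.Icc (k-d) k).inf (wfun f a) = Rfun f a d (k-d) := by
    intro k
    apply le_antisymm
    · by_cases hk : k ≤ d
      · have hkd : k - d = 0 := by omega
        rw [hkd]
        refine le_trans (Finset.inf_le (show (0:ℕ) ∈ Finset.Icc 0 k from
          Finset.mem_Icc.mpr ⟨le_rfl, Nat.zero_le k⟩)) ?_
        apply Finset.le_inf
        intro j _
        exact hmin j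
      · rw [Rfun]
        exact Finset.inf_mono (Finset.Icc_subset_Icc le_rfl (by omega))
    · apply Finset.le_inf
      intro j hj
      obtain ⟨hj1, hj2⟩ := Finset.mem_Icc.mp hj
      by_cases hjd : j ≤ d
      · exact Finset.inf_le (Finset.mem_Icc.mpr ⟨hj1, hjd⟩)
      · rw [hwtop j (by omega)]; exact le_top
  have A2 : ∀ k, (Finset.Icc (k-d) k).inf (wfun (gpoly f a d) a) = Rfun f a d (k-d) := by
    intro k
    apply le_antisymm
    · by_cases hkd : k - d ≤ d
      · refine le_trans (Finset.inf_le (show k - d ∈ Finset.Icc (k-d) k from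
          Finset.mem_Icc.mpr ⟨le_rfl, Nat.sub_le k d⟩)) ?_
        rw [wfun_gpoly, if_pos hkd]
      · rw [Rfun_top f a d (by omega)]; exact le_top
    · apply Finset.le_inf
      intro j hj
      obtain ⟨hj1, hj2⟩ := Finset.mem_Icc.mp hj
      rw [wfun_gpoly]
      by_cases hjd : j ≤ d
      · rw [if_pos hjd]; exact Rfun_mono f a d hj1
      · rw [if_neg hjd]; exact le_top
  ext k
  apply untrop_injective
  rw [conv_coeff, conv_coeff]
  congr 1
  calc (Finset.Icc (k-d) k).inf (fun j => untrop (f.coeff j) + ↑((j:ℝ)*a))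
      = Rfun f a d (k-d) := A1 k
    _ = (Finset.Icc (k-d) k).inf (fun j => untrop ((gpoly f a d).coeff j) + ↑((j:ℝ)*a)) := (A2 k).symm

lemma lemB (f : Polynomial TropR) (a : ℝ) (d : ℕ) (hd : 1 ≤ d)
    (h01 : Rfun f a d 0 = Rfun f a d 1) :
    gpoly f a d = lin a * qpoly f a d := by
  have hexp : lin a * qpoly f a d = X * qpoly f a d + C (tt a) * qpoly f a d := by
    rw [lin]; ring
  ext l
  rw [hexp, coeff_add, coeff_C_mul, coeff_gpoly]
  rcases Nat.eq_zero_or_pos l with h | h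
  · subst h
    rw [coeff_X_mul_zero, zero_add, coeff_qpoly, if_pos (by omega), if_pos (by omega)]
    apply untrop_injective
    rw [untrop_mul, untrop_trop, untrop_trop, untrop_tt]
    rw [wt_shuffle2, ← h01]
    congr 1
    · norm_num
  · obtain ⟨l', rfl⟩ := Nat.exists_eq_add_of_lt h
    rw [zero_add, coeff_X_mul, coeff_qpoly, coeff_qpoly]
    by_cases h1 : l' + 1 < d
    · rw [if_pos (show l' + 1 < d + 1 by omega), if_pos (show l' < d by omega),
        if_pos (show l' + 1 < d by omega)]
      apply untrop_injective
      rw [untrop_add, untrop_mul, untrop_trop, untrop_trop, untrop_trop, untrop_tt]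
      rw [wt_shuffle2]
      have harg : ((-(((l'+1:ℕ):ℝ)+1)*a) + a) = (-((l':ℝ)+1)*a) := by push_cast; ring
      rw [harg]
      rw [show (-(((l'+1:ℕ)):ℝ)*a) = (-((l':ℝ)+1)*a) by push_cast; ring]
      exact (inf_eq_left.mpr (add_le_add_left
        (Rfun_mono f a d (show l' + 1 ≤ l' + 1 + 1 by omega)) _)).symm
    · by_cases h2 : l' + 1 = d
      · rw [if_pos (show l' + 1 < d + 1 by omega), if_pos (show l' < d by omega),
          if_neg (show ¬ (l' + 1 < d) by omega), mul_zero, add_zero]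
        congr 2
        push_cast
        ring
      · rw [if_neg (show ¬ (l' + 1 < d + 1) by omega), if_neg (show ¬ (l' < d) by omega),
          if_neg (show ¬ (l' + 1 < d) by omega), mul_zero, add_zero]

lemma trop_ne_zero_iff {x : WithTop ℝ} : trop x ≠ (0:TropR) ↔ x ≠ ⊤ := by
  constructor
  · intro h hx; exact h (by rw [hx]; rfl)
  · intro h hx; exact h (congrArg untrop hx)

lemma untrop_ne_top_iff {x : TropR} : untrop x ≠ ⊤ ↔ x ≠ 0 := by
  rw [← trop_ne_zero_iff, trop_untrop]

lemma key_step {P : Ideal (Polynomial TropR)} (hPrime : P.IsPrime)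
    {f : Polynomial TropR} (hf : f ∈ P) (h0 : f.coeff 0 ≠ 0) (hd : 1 ≤ f.natDegree) :
    (∃ r : ℝ, lin r ∈ P) ∨
      ∃ q ∈ P, q.coeff 0 ≠ 0 ∧ q.natDegree + 1 = f.natDegree := by
  classical
  set d := f.natDegree with hdd
  have hfne : f ≠ 0 := fun h => h0 (by simp [h])
  have hfd : f.coeff d ≠ 0 := Polynomial.leadingCoeff_ne_zero.mpr hfne
  have hu0 : untrop (f.coeff 0) ≠ ⊤ := untrop_ne_top_iff.mpr h0
  obtain ⟨f0, hf0⟩ := WithTop.ne_top_iff_exists.mp hu0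
  set s : Finset ℕ := (Finset.Icc 1 d).filter (fun i => f.coeff i ≠ 0) with hs
  have hds : d ∈ s := Finset.mem_filter.mpr ⟨Finset.mem_Icc.mpr ⟨hd, le_rfl⟩, hfd⟩
  have hsne : s.Nonempty := ⟨d, hds⟩
  set rv : ℕ → ℝ := fun i => WithTop.untopD 0 (untrop (f.coeff i)) with hrvdef
  have hrv : ∀ i ∈ s, untrop (f.coeff i) = ↑(rv i) := by
    intro i hi
    exact (coe_untop'_of_ne (untrop_ne_top_iff.mpr (Finset.mem_filter.mp hi).2)).symm
  set a : ℝ := s.sup' hsne (fun i => (f0 - rv i)/(i:ℝ)) with ha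
  have ha_ge : ∀ i ∈ s, (f0 - rv i)/(i:ℝ) ≤ a := fun i hi => Finset.le_sup' (fun i => (f0 - rv i)/(i:ℝ)) hi
  obtain ⟨istar, histar, hista⟩ : ∃ i ∈ s, a = (f0 - rv i)/(i:ℝ) :=
    Finset.exists_mem_eq_sup' hsne _
  have histar1 : 1 ≤ istar ∧ istar ≤ d := Finset.mem_Icc.mp (Finset.mem_filter.mp histar).1
  -- min property of w
  have hw0 : wfun f a 0 = ↑f0 := by
    simp only [wfun, ← hf0, Nat.cast_zero, zero_mul, ← WithTop.coe_add, add_zero]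
  have hwge : ∀ j, wfun f a 0 ≤ wfun f a j := by
    intro j
    rcases Nat.eq_zero_or_pos j with hj | hj
    · subst hj; exact le_rfl
    · by_cases hjs : j ∈ s
      · rw [hw0]
        simp only [wfun]
        rw [hrv j hjs, ← WithTop.coe_add, WithTop.coe_le_coe]
        have hja := ha_ge j hjs
        have hjpos : (0:ℝ) < (j:ℝ) := by exact_mod_cast hj
        rw [div_le_iff₀ hjpos] at hja
        linarith
      · have : f.coeff j = 0 := by
          by_cases hjd : j ≤ d
          · by_contra hne
            exact hjs (Finset.mem_filter.mpr ⟨Finset.mem_Icc.mpr ⟨hj, hjd⟩, hne⟩)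
          · exact coeff_eq_zero_of_natDegree_lt (by omega)
        simp only [wfun]
        rw [this, untrop_zero, top_add]
        exact le_top
  have hwstar : wfun f a istar = ↑f0 := by
    simp only [wfun]
    rw [hrv istar histar, ← WithTop.coe_add, WithTop.coe_eq_coe]
    have hjpos : (0:ℝ) < (istar:ℝ) := by exact_mod_cast histar1.1
    rw [hista]
    field_simp
    ring
  have hR0 : Rfun f a d 0 = ↑f0 := by
    apply le_antisymm
    · exact le_trans (Finset.inf_le (show (0:ℕ) ∈ Finset.Icc 0 d from
        Finset.mem_Icc.mpr ⟨le_rfl, Nat.zero_le d⟩)) (le_of_eq hw0)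
    · exact Finset.le_inf (fun j _ => le_of_eq_of_le hw0.symm (hwge j))
  have hR1 : Rfun f a d 1 = ↑f0 := by
    apply le_antisymm
    · exact le_trans (Finset.inf_le (show istar ∈ Finset.Icc 1 d from
        Finset.mem_Icc.mpr histar1)) (le_of_eq hwstar)
    · exact Finset.le_inf (fun j _ => le_of_eq_of_le hw0.symm (hwge j))
  -- the two identities
  have hA : (lin a)^d * f = (lin a)^d * gpoly f a d := lemA f a hwge
  have hB : gpoly f a d = lin a * qpoly f a d := lemB f a d hd (hR0.trans hR1.symm)
  have hmem : (lin a)^d * ((lin a) * qpoly f a d) ∈ P := by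
    rw [← hB, ← hA]
    exact P.mul_mem_left _ hf
  rcases hPrime.mem_or_mem hmem with hL | hlq
  · exact Or.inl ⟨a, hPrime.mem_of_pow_mem d hL⟩
  rcases hPrime.mem_or_mem hlq with hl | hq
  · exact Or.inl ⟨a, hl⟩
  refine Or.inr ⟨qpoly f a d, hq, ?_, ?_⟩
  · rw [coeff_qpoly, if_pos (show 0 < d by omega), trop_ne_zero_iff]
    rw [show ((0:ℕ):ℝ) = (0:ℝ) by norm_num, hR1]
    rw [← WithTop.coe_add]
    exact WithTop.coe_ne_top
  · have hRd : Rfun f a d d ≠ ⊤ := by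
      have : Rfun f a d d ≤ wfun f a d := Finset.inf_le (Finset.mem_Icc.mpr ⟨le_rfl, le_rfl⟩)
      have hwd : wfun f a d ≠ ⊤ := by
        simp only [wfun]
        rw [hrv d hds, ← WithTop.coe_add]
        exact WithTop.coe_ne_top
      exact fun htop => hwd (top_le_iff.mp (htop ▸ this))
    have hqd : (qpoly f a d).coeff (d-1) ≠ 0 := by
      rw [coeff_qpoly, if_pos (show d - 1 < d by omega), trop_ne_zero_iff,
        (show d - 1 + 1 = d by omega)]
      intro htop
      rcases WithTop.add_eq_top.mp htop with h | h
      · exact hRd h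
      · exact WithTop.coe_ne_top h
    have hqle : (qpoly f a d).natDegree ≤ d - 1 := by
      apply natDegree_le_iff_coeff_eq_zero.mpr
      intro m hm
      rw [coeff_qpoly, if_neg (by omega)]
    have hqge : d - 1 ≤ (qpoly f a d).natDegree := le_natDegree_of_ne_zero hqd
    omega

/-- Main conclusion of the Newton-polygon descent: `P` contains a linear polynomial. -/
lemma exists_lin_mem {P : Ideal (Polynomial TropR)} (hPrime : P.IsPrime) (hTop : P ≠ ⊤)
    {f : Polynomial TropR} (hf : f ∈ P) (h0 : f.coeff 0 ≠ 0) : ∃ r : ℝ, lin r ∈ P := by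
  classical
  obtain ⟨n, hn⟩ : ∃ n, f.natDegree ≤ n := ⟨f.natDegree, le_rfl⟩
  induction n generalizing f with
  | zero =>
    exfalso
    have : f = C (f.coeff 0) := Polynomial.eq_C_of_natDegree_eq_zero (by omega)
    exact hTop (P.eq_top_of_isUnit_mem (this ▸ hf)
      ((isUnit_C).mpr (isUnit_of_ne_zero h0)))
  | succ n ih =>
    rcases Nat.eq_zero_or_pos f.natDegree with hd | hd
    · exfalso
      have : f = C (f.coeff 0) := Polynomial.eq_C_of_natDegree_eq_zero hd
      exact hTop (P.eq_top_of_isUnit_mem (this ▸ hf)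
        ((isUnit_C).mpr (isUnit_of_ne_zero h0)))
    · rcases key_step hPrime hf h0 hd with h | ⟨q, hq, hq0, hqd⟩
      · exact h
      · exact ih hq hq0 (by omega)


lemma untrop_trop_pow (r : ℝ) (n : ℕ) :
    untrop ((Tropical.trop ((r:ℝ) : WithTop ℝ))^n) = ((((n:ℝ)*r) : ℝ) : WithTop ℝ) := by
  induction n with
  | zero => rw [pow_zero, untrop_one]; norm_num
  | succ n ih =>
    rw [pow_succ, untrop_mul, ih, untrop_trop, ← WithTop.coe_add, WithTop.coe_eq_coe]
    push_cast; ring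

lemma untrop_tt_pow' (r : ℝ) (n : ℕ) :
    untrop ((tt r)^n) = ((((n:ℝ)*r) : ℝ) : WithTop ℝ) := untrop_trop_pow r n

lemma untrop_trmVal (f : Polynomial TropR) (r : ℝ) (i : ℕ) :
    untrop (trmVal f ↑r i) = untrop (f.coeff i) + ↑((i:ℝ)*r) := by
  rw [trmVal, untrop_mul, untrop_trop_pow]

lemma one_ne_zero' : (1 : TropR) ≠ 0 := by
  intro hcon
  have h2 : untrop (1:TropR) = untrop (0:TropR) := congrArg untrop hcon
  rw [untrop_one, untrop_zero] at h2
  simp at h2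

lemma X_mem_of_all_coeff_zero (hPrime : P.IsPrime) (hA : ∀ g ∈ P, g.coeff 0 = 0)
    {f : Polynomial TropR} (hf : f ∈ P) (hfne : f ≠ 0) : (X : Polynomial TropR) ∈ P := by
  obtain ⟨n, hn⟩ : ∃ n, f.natDegree ≤ n := ⟨_, le_rfl⟩
  induction n generalizing f with
  | zero =>
    exfalso
    have hC : f = C (f.coeff 0) := Polynomial.eq_C_of_natDegree_eq_zero (by omega)
    rw [hA f hf, C_0] at hC
    exact hfne hC
  | succ n ih =>
    have hfX : f = f.divX * X := by
      conv_lhs => rw [← divX_mul_X_add f]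
      rw [hA f hf, C_0, add_zero]
    rcases hPrime.mem_or_mem (hfX ▸ hf) with h | h
    · have hdne : f.divX ≠ 0 := fun hz => hfne (by rw [hfX, hz, zero_mul])
      have hdeg : f.natDegree ≠ 0 := by
        intro h0
        have hC : f = C (f.coeff 0) := Polynomial.eq_C_of_natDegree_eq_zero h0
        rw [hA f hf, C_0] at hC
        exact hfne hC
      have : f.divX.natDegree ≤ n := by
        rw [natDegree_divX_eq_natDegree_tsub_one]; omega
      exact ih h hdne this
    · exact h

lemma trmVal_erase (f : Polynomial TropR) (r : ℝ) (n l : ℕ) :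
    trmVal (f.erase n) ↑r l = if l = n then 0 else trmVal f ↑r l := by
  rw [trmVal, Polynomial.coeff_erase]
  split_ifs
  · rw [zero_mul]
  · rfl

lemma eval_erase_eq {f : Polynomial TropR} {r : ℝ} {j p : ℕ} (hp : p ≠ j)
    (hatt : trmVal f ↑r p = f.eval (trop ↑r)) :
    (f.erase j).eval (trop ↑r) = f.eval (trop ↑r) := by
  apply le_antisymm
  · calc (f.erase j).eval (trop ↑r) ≤ trmVal (f.erase j) ↑r p := eval_le_trmVal _ _ _
      _ = trmVal f ↑r p := by rw [trmVal_erase, if_neg hp]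
      _ = _ := hatt
  · obtain ⟨i, _, hi⟩ := exists_attain (f.erase j) ↑r
    rw [← hi, trmVal_erase]
    split_ifs
    · exact untrop_le_iff.mp le_top
    · exact eval_le_trmVal f ↑r i

/-- existence of the "transport" binomial with value `f.coeff j` at `j` and
prescribed value at `p`. -/
lemma exists_transport_binomial (hTrop : IsTropicalIdealUV P) {r : ℝ} (hlin : lin r ∈ P)
    {f : Polynomial TropR} {j p : ℕ} (hjp : j ≠ p) {uj : ℝ}
    (huj : (↑uj : WithTop ℝ) = untrop (f.coeff j)) :
    ∃ E : Polynomial TropR, E ∈ P ∧ E.coeff j = f.coeff j ∧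
      E.coeff p = trop ↑(uj + ((j:ℝ) - (p:ℝ))*r) ∧ ∀ l, l ≠ j → l ≠ p → E.coeff l = 0 := by
  have hj0 : f.coeff j = trop ↑uj := by rw [← trop_untrop (f.coeff j), ← huj]
  rcases lt_or_gt_of_ne hjp with hlt | hgt
  · -- j < p
    set c2 : TropR := trop ↑(uj + ((j:ℝ) - (p:ℝ))*r) with hc2
    have hc2ne : c2 ≠ 0 := trop_ne_zero_iff.mpr WithTop.coe_ne_top
    refine ⟨bin r j p c2, ?_, ?_, ?_, ?_⟩
    · have := bin_mem hTrop hlin (p - j) j c2 hc2ne (by omega)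
      rwa [(show j + (p - j) = p by omega)] at this
    · rw [coeff_bin r hlt, if_pos rfl, hj0]
      apply untrop_injective
      rw [untrop_mul, untrop_tt_pow', hc2, untrop_trop, untrop_trop,
        ← WithTop.coe_add, WithTop.coe_eq_coe]
      have hcast : ((p - j : ℕ):ℝ) = (p:ℝ) - j := Nat.cast_sub hlt.le
      rw [hcast]; ring
    · rw [coeff_bin r hlt, if_neg (Ne.symm hlt.ne), if_pos rfl]
    · intro l hlj hlp
      rw [coeff_bin r hlt, if_neg hlj, if_neg hlp]
  · -- p < j
    refine ⟨bin r p j (f.coeff j), ?_, ?_, ?_, ?_⟩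
    · have hfj0 : f.coeff j ≠ 0 := by
        rw [hj0]; exact trop_ne_zero_iff.mpr WithTop.coe_ne_top
      have := bin_mem hTrop hlin (j - p) p (f.coeff j) hfj0 (by omega)
      rwa [(show p + (j - p) = j by omega)] at this
    · rw [coeff_bin r hgt, if_neg (Ne.symm hgt.ne), if_pos rfl]
    · rw [coeff_bin r hgt, if_pos rfl, hj0]
      apply untrop_injective
      rw [untrop_mul, untrop_tt_pow', untrop_trop, untrop_trop,
        ← WithTop.coe_add, WithTop.coe_eq_coe]
      have hcast : ((j - p : ℕ):ℝ) = (j:ℝ) - p := Nat.cast_sub hgt.le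
      rw [hcast]
      try ring
    · intro l hlj hlp
      rw [coeff_bin r hgt, if_neg hlp, if_neg hlj]

lemma attain_mem (hTrop : IsTropicalIdealUV P) {r : ℝ} (hlin : lin r ∈ P) :
    ∀ n (f : Polynomial TropR), f.support.card ≤ n → ∀ p q : ℕ, p < q →
      f.coeff p ≠ 0 →
      trmVal f ↑r p = f.eval (trop ↑r) → trmVal f ↑r q = f.eval (trop ↑r) →
      f ∈ P := by
  intro n
  induction n with
  | zero =>
    intro f hcard p q _ hp0 _ _
    exfalso
    have : f = 0 := Polynomial.support_eq_empty.mp (Finset.card_eq_zero.mp (by omega))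
    exact hp0 (by rw [this]; simp)
  | succ n ih =>
    intro f hcard p q hpq hp0 hvp hvq
    have hq0 : f.coeff q ≠ 0 := by
      intro hq
      have hz : trmVal f ↑r q = 0 := by rw [trmVal, hq, zero_mul]
      rw [hz] at hvq
      have : trmVal f ↑r p = 0 := by rw [hvp, ← hvq]
      rcases mul_eq_zero.mp this with hc | hpow
      · exact hp0 hc
      · exact (pow_ne_zero _ (tt_ne_zero r)) hpow
    obtain ⟨up, hup⟩ := WithTop.ne_top_iff_exists.mp (untrop_ne_top_iff.mpr hp0)
    obtain ⟨uq, huq⟩ := WithTop.ne_top_iff_exists.mp (untrop_ne_top_iff.mpr hq0)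
    -- the common untrop equation
    have hpqval : up + (p:ℝ)*r = uq + (q:ℝ)*r := by
      have h1' : untrop (trmVal f ↑r p) = untrop (trmVal f ↑r q) := by rw [hvp, hvq]
      rw [untrop_trmVal, untrop_trmVal, ← hup, ← huq, ← WithTop.coe_add,
        ← WithTop.coe_add, WithTop.coe_eq_coe] at h1'
      exact h1'
    by_cases hsub : f.support ⊆ {p, q}
    · have hfeq : f = bin r p q (f.coeff q) := by
        ext l
        rw [coeff_bin r hpq]
        by_cases h1 : l = p
        · rw [if_pos h1, h1]
          apply untrop_injective
          rw [untrop_mul, untrop_tt_pow', ← hup, ← huq, ← WithTop.coe_add,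
            WithTop.coe_eq_coe, Nat.cast_sub hpq.le]
          linarith
        · rw [if_neg h1]
          by_cases h2 : l = q
          · rw [if_pos h2, h2]
          · rw [if_neg h2]
            have : l ∉ f.support := by
              intro hl
              rcases Finset.mem_insert.mp (hsub hl) with h | h
              · exact h1 h
              · exact h2 (Finset.mem_singleton.mp h)
            exact Polynomial.notMem_support_iff.mp this
      rw [hfeq]
      have := bin_mem hTrop hlin (q - p) p (f.coeff q) hq0 (by omega)
      rwa [(show p + (q - p) = q by omega)] at this
    · obtain ⟨j, hjs, hjpq⟩ := Finset.not_subset.mp hsub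
      have hjp : j ≠ p := fun h => hjpq (by rw [h]; exact Finset.mem_insert_self p {q})
      have hjq : j ≠ q := fun h => hjpq (by rw [h]; exact Finset.mem_insert_of_mem (Finset.mem_singleton_self q))
      have hj0 : f.coeff j ≠ 0 := Polynomial.mem_support_iff.mp hjs
      obtain ⟨uj, huj⟩ := WithTop.ne_top_iff_exists.mp (untrop_ne_top_iff.mpr hj0)
      obtain ⟨E, hEP, hEj, hEp, hE0⟩ := exists_transport_binomial hTrop hlin hjp huj
      have hple : up + (p:ℝ)*r ≤ uj + (j:ℝ)*r := by
        have hle : trmVal f ↑r p ≤ trmVal f ↑r j := by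
          rw [hvp]; exact eval_le_trmVal f ↑r j
        have := untrop_le_iff.mpr hle
        rw [untrop_trmVal, untrop_trmVal, ← hup, ← huj, ← WithTop.coe_add,
          ← WithTop.coe_add, WithTop.coe_le_coe] at this
        exact this
      have hfeq : f = f.erase j + E := by
        ext l
        rw [coeff_add, Polynomial.coeff_erase]
        by_cases h1 : l = j
        · rw [if_pos h1, zero_add, h1, hEj]
        · rw [if_neg h1]
          by_cases h2 : l = p
          · rw [h2, hEp]
            refine (Tropical.add_eq_left ?_).symm
            rw [← untrop_le_iff, untrop_trop, ← hup, WithTop.coe_le_coe]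
            linarith
          · rw [hE0 l h1 h2, add_zero]
      rw [hfeq]
      refine P.add_mem ?_ hEP
      have hcard' : (f.erase j).support.card ≤ n := by
        rw [Polynomial.support_erase]
        have h1 := Finset.card_erase_of_mem hjs
        have h2 : 1 ≤ f.support.card := Finset.card_pos.mpr ⟨j, hjs⟩
        omega
      have heval : (f.erase j).eval (trop ↑r) = f.eval (trop ↑r) :=
        eval_erase_eq (Ne.symm hjp) hvp
      refine ih (f.erase j) hcard' p q hpq ?_ ?_ ?_
      · rw [Polynomial.coeff_erase, if_neg (Ne.symm hjp)]; exact hp0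
      · rw [trmVal_erase, if_neg (Ne.symm hjp), heval]; exact hvp
      · rw [trmVal_erase, if_neg (Ne.symm hjq), heval]; exact hvq

lemma unique_attain_false (hTrop : IsTropicalIdealUV P) (hPrime : P.IsPrime) (hTop : P ≠ ⊤)
    {r : ℝ} (hlin : lin r ∈ P) :
    ∀ n (f : Polynomial TropR), f ∈ P → f.support.card ≤ n → ∀ i₀ : ℕ,
      f.coeff i₀ ≠ 0 → trmVal f ↑r i₀ = f.eval (trop ↑r) →
      (∀ l, l ≠ i₀ → trmVal f ↑r i₀ < trmVal f ↑r l) → False := by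
  intro n
  induction n with
  | zero =>
    intro f _ hcard i₀ h0 _ _
    have : f = 0 := Polynomial.support_eq_empty.mp (Finset.card_eq_zero.mp (by omega))
    exact h0 (by rw [this]; simp)
  | succ n ih =>
    intro f hfP hcard i₀ h0 hatt hstrict
    obtain ⟨ui, hui⟩ := WithTop.ne_top_iff_exists.mp (untrop_ne_top_iff.mpr h0)
    by_cases hsub : f.support ⊆ {i₀}
    · -- monomial case
      have hfeq : f = C (f.coeff i₀) * X^i₀ := by
        ext l
        rw [coeff_C_mul, coeff_X_pow]
        by_cases h1 : l = i₀
        · rw [if_pos h1, mul_one, h1]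
        · rw [if_neg h1, mul_zero]
          refine Polynomial.notMem_support_iff.mp (fun hl => h1 ?_)
          exact Finset.mem_singleton.mp (hsub hl)
      rcases hPrime.mem_or_mem (hfeq ▸ hfP) with h | h
      · exact top_of_unit_mem hTop h0 h
      · rcases Nat.eq_zero_or_pos i₀ with hi | hi
        · rw [hi, pow_zero] at h
          exact hTop ((Ideal.eq_top_iff_one P).mpr h)
        · have hX : (X : Polynomial TropR) ∈ P := hPrime.mem_of_pow_mem i₀ h
          have h1c : (lin r).coeff 1 = (X : Polynomial TropR).coeff 1 := by
            simp [lin, coeff_X_one]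
          obtain ⟨h', hh'P, hh'1, hh'co⟩ := erase_mem hTrop hlin hX 1 h1c
            (by rw [h1c, coeff_X_one]; exact one_ne_zero')
            (by intro l hl
                left
                rw [coeff_X, if_neg (fun h => hl h.symm)])
          have hCt : h' = C (tt r) := by
            ext l
            by_cases h1 : l = 1
            · rw [h1, hh'1, coeff_C]; norm_num
            · rw [hh'co l h1]
              rcases Nat.eq_zero_or_pos l with h2 | h2
              · rw [h2]
                simp [lin]
              · rw [coeff_C, if_neg (by omega)]
                have : (lin r).coeff l = 0 := by
                  simp only [lin, coeff_add, coeff_C, coeff_X]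
                  rw [if_neg (by omega : ¬ (1 = l)), if_neg (by omega : ¬ (l = 0)), add_zero]
                rw [this, coeff_X, if_neg (by omega : ¬ (1 = l)), add_zero]
          rw [hCt] at hh'P
          exact top_of_unit_mem hTop (tt_ne_zero r) hh'P
    · -- strip case
      obtain ⟨j, hjs, hjne'⟩ := Finset.not_subset.mp hsub
      have hjne : j ≠ i₀ := fun h => hjne' (by rw [h]; exact Finset.mem_singleton_self i₀)
      have hj0 : f.coeff j ≠ 0 := Polynomial.mem_support_iff.mp hjs
      obtain ⟨uj, huj⟩ := WithTop.ne_top_iff_exists.mp (untrop_ne_top_iff.mpr hj0)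
      obtain ⟨E, hEP, hEj, hEi, hE0⟩ := exists_transport_binomial hTrop hlin hjne huj
      have hstrictj : ui + (i₀:ℝ)*r < uj + (j:ℝ)*r := by
        have hlt := hstrict j hjne
        have := untrop_lt_iff.mpr hlt
        rw [untrop_trmVal, untrop_trmVal, ← hui, ← huj, ← WithTop.coe_add,
          ← WithTop.coe_add, WithTop.coe_lt_coe] at this
        exact this
      obtain ⟨h', hh'P, hh'j, hh'co⟩ := erase_mem hTrop hfP hEP j hEj.symm hj0
        (by intro l hl
            by_cases h2 : l = i₀
            · right
              rw [h2, hEi]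
              intro hcon
              have := congrArg untrop hcon
              rw [untrop_trop, ← hui, WithTop.coe_eq_coe] at this
              linarith
            · left; exact hE0 l hl h2)
      have herase : h' = f.erase j := by
        ext l
        rw [Polynomial.coeff_erase]
        by_cases h1 : l = j
        · rw [if_pos h1, h1, hh'j]
        · rw [if_neg h1, hh'co l h1]
          by_cases h2 : l = i₀
          · rw [h2, hEi]
            refine Tropical.add_eq_left ?_
            rw [← untrop_le_iff, untrop_trop, ← hui, WithTop.coe_le_coe]
            linarith
          · rw [hE0 l h1 h2, add_zero]
      rw [herase] at hh'P
      have hcard' : (f.erase j).support.card ≤ n := by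
        rw [Polynomial.support_erase]
        have h1 := Finset.card_erase_of_mem hjs
        have h2 : 1 ≤ f.support.card := Finset.card_pos.mpr ⟨j, hjs⟩
        omega
      have heval : (f.erase j).eval (trop ↑r) = f.eval (trop ↑r) :=
        eval_erase_eq (Ne.symm hjne) hatt
      refine ih (f.erase j) hh'P hcard' i₀ ?_ ?_ ?_
      · rw [Polynomial.coeff_erase, if_neg (Ne.symm hjne)]; exact h0
      · rw [trmVal_erase, if_neg (Ne.symm hjne), heval]; exact hatt
      · intro l hl
        rw [trmVal_erase, if_neg (Ne.symm hjne), trmVal_erase]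
        by_cases h1 : l = j
        · rw [if_pos h1]
          rw [← untrop_lt_iff, untrop_trmVal, ← hui, ← WithTop.coe_add, untrop_zero]
          exact WithTop.coe_lt_top _
        · rw [if_neg h1]
          exact hstrict l hl

end TP

/-- **Classification of tropical prime ideals of `R̄[x]`.**  Every prime ideal of
`R̄[x]` that is also a tropical ideal, and is neither the zero ideal `{∞}` nor the unit
ideal, equals `J_a = {f : a ∈ V(f)}` for some `a ∈ ℝ ∪ {∞}`. -/
theorem prime_tropical_ideal_eq_Ja (P : Ideal (Polynomial TropR))
    (hPrime : P.IsPrime) (hTrop : IsTropicalIdealUV P) (hBot : P ≠ ⊥) (hTop : P ≠ ⊤) :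
    ∃ a : WithTop ℝ, ∀ f, f ∈ P ↔ a ∈ tropVa f := by
  classical
  by_cases hA : ∀ g ∈ P, g.coeff 0 = 0
  · refine ⟨⊤, fun f => ?_⟩
    obtain ⟨f₀, hf₀P, hf₀ne⟩ := Submodule.exists_mem_ne_zero_of_ne_bot hBot
    have hX : (X : Polynomial TropR) ∈ P := TP.X_mem_of_all_coeff_zero hPrime hA hf₀P hf₀ne
    constructor
    · intro hf
      exact (TP.top_mem_tropVa_iff f).mpr (hA f hf)
    · intro hf
      have h0 : f.coeff 0 = 0 := (TP.top_mem_tropVa_iff f).mp hf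
      have hfX : f = f.divX * X := by
        conv_lhs => rw [← divX_mul_X_add f]
        rw [h0, C_0, add_zero]
      rw [hfX]
      exact P.mul_mem_left _ hX
  · push_neg at hA
    obtain ⟨f₀, hf₀P, hf₀ne⟩ := hA
    obtain ⟨r, hlin⟩ := TP.exists_lin_mem hPrime hTop hf₀P hf₀ne
    refine ⟨↑r, fun f => ?_⟩
    constructor
    · intro hfP
      by_contra hnot
      simp only [tropVa, Set.mem_setOf_eq, not_or] at hnot
      push_neg at hnot
      obtain ⟨hev, hpair⟩ := hnot
      obtain ⟨i₀, _, hi₀⟩ := TP.exists_attain f ↑r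
      have h0 : f.coeff i₀ ≠ 0 := by
        intro h
        apply hev
        rw [← hi₀, trmVal, h, zero_mul]
      refine TP.unique_attain_false hTrop hPrime hTop hlin f.support.card f hfP le_rfl
        i₀ h0 hi₀ ?_
      intro l hl
      have hle : trmVal f ↑r i₀ ≤ trmVal f ↑r l := by
        rw [hi₀]; exact TP.eval_le_trmVal f ↑r l
      refine lt_of_le_of_ne hle ?_
      intro heq
      exact hpair i₀ l (fun h => hl h.symm) hi₀ (by rw [← heq]; exact hi₀)
    · intro hf
      rcases hf with hev | ⟨i, j, hij, hi, hj⟩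
      · rw [TP.eq_zero_of_eval_eq_zero hev]
        exact P.zero_mem
      · by_cases hz : f.eval (Tropical.trop ((↑r : WithTop ℝ))) = 0
        · rw [TP.eq_zero_of_eval_eq_zero hz]; exact P.zero_mem
        · have hci : f.coeff i ≠ 0 := fun h => hz (by rw [← hi, trmVal, h, zero_mul])
          have hcj : f.coeff j ≠ 0 := fun h => hz (by rw [← hj, trmVal, h, zero_mul])
          rcases lt_or_gt_of_ne hij with h | h
          · exact TP.attain_mem hTrop hlin f.support.card f le_rfl i j h hci hi hj
          · exact TP.attain_mem hTrop hlin f.support.card f le_rfl j i h hcj hj hi
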